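/- For all natural numbers d ≥ 1 and p ≥ 1 and all vectors q, k ∈ ℝ^d, the inner product of the symmetric-power embeddings equals the p-th power of the inner product: ⟨spow_p(q), spow_p(k)⟩ = (⟨q, k⟩)^p. -/

import Mathlib

open scoped Classical

/-- hist_k(i): the number of positions j with i_j = k. -/
def hist {p d : ℕ} (i : Fin p → Fin d) (k : Fin d) : ℕ :=
  (Finset.univ.filter (fun j => i j = k)).card

/-- The symmetric power embedding spow_p : ℝ^d → ℝ^{|NDMI^p_d|}, indexed by
non-decreasing multi-indices (monotone functions Fin p → Fin d), with entry
√(p! / ∏_k hist_k(i)!) · ∏_j x_{i_j}. -/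
noncomputable def spow {d : ℕ} (p : ℕ) (x : Fin d → ℝ)
    (i : {f : Fin p → Fin d // Monotone f}) : ℝ :=
  Real.sqrt ((p.factorial : ℝ) / ∏ k, ((hist i.1 k).factorial : ℝ)) * ∏ j, x (i.1 j)

lemma hist_eq_count {p d : ℕ} (f : Fin p → Fin d) (k : Fin d) :
    hist f k = (List.ofFn f).count k := by
  rw [hist, List.ofFn_eq_map, List.count_eq_countP, List.countP_map,
    Finset.card_filter, Fin.sum_univ_def]
  induction List.finRange p with
  | nil => simp
  | cons a l ih =>
      simp [List.countP_cons, ih]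
      by_cases h : f a = k <;> simp [h, Nat.add_comm]

lemma hist_inj {p d : ℕ} {f g : Fin p → Fin d} (hf : Monotone f) (hg : Monotone g)
    (h : hist f = hist g) : f = g := by
  apply List.ofFn_injective
  apply List.Perm.eq_of_sortedLE hf.sortedLE_ofFn hg.sortedLE_ofFn
  rw [List.perm_iff_count]
  intro a
  rw [← hist_eq_count, ← hist_eq_count, h]

lemma hist_surj {p d : ℕ} (c : Fin d → ℕ) (hc : ∑ a, c a = p) :
    ∃ f : Fin p → Fin d, Monotone f ∧ hist f = c := by
  classical
  set L : List (Fin d) := (List.finRange d).flatMap (fun x => List.replicate (c x) x) with hL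
  have hlen : L.length = p := by
    rw [hL, List.length_flatMap]
    simp only [Function.comp_def, List.length_replicate]
    rw [← Fin.sum_univ_def, hc]
  have hsorted : L.Pairwise (· ≤ ·) := by
    rw [hL, List.pairwise_flatMap]
    constructor
    · intro a _
      exact List.pairwise_replicate.2 (Or.inr le_rfl)
    · have h2 : List.Pairwise (· < ·) (List.finRange d) := List.pairwise_lt_finRange d
      refine h2.imp ?_
      intro a b hab x hx y hy
      rw [List.eq_of_mem_replicate hx, List.eq_of_mem_replicate hy]
      exact hab.le
  have hcount : ∀ a, L.count a = c a := by
    intro a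
    rw [hL, List.count_eq_countP, List.countP_flatMap]
    have h3 : ((List.countP fun x => x == a) ∘ fun x => List.replicate (c x) x)
        = fun x => if x = a then c x else 0 := by
      funext x
      simp only [Function.comp_apply, List.countP_replicate]
      by_cases h : x = a <;> simp [h]
    rw [h3, ← Fin.sum_univ_def]
    simp
  have hofn : List.ofFn (fun j : Fin p => L.get (Fin.cast hlen.symm j)) = L := by
    apply List.ext_get
    · simp [hlen]
    · intro n h1 h2
      simp
  refine ⟨fun j => L.get (Fin.cast hlen.symm j), ?_, ?_⟩
  · rw [← List.sortedLE_ofFn_iff, hofn]; exact hsorted.sortedLE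
  · funext a
    rw [hist_eq_count, hofn, hcount]

lemma sum_hist {p d : ℕ} (f : Fin p → Fin d) : ∑ a, hist f a = p := by
  classical
  have := Finset.card_eq_sum_card_fiberwise (f := f) (s := Finset.univ) (t := Finset.univ)
    (fun x _ => Finset.mem_univ _)
  simpa [hist] using this.symm

lemma prod_comp_hist {p d : ℕ} (x : Fin d → ℝ) (f : Fin p → Fin d) :
    ∏ j, x (f j) = ∏ a, x a ^ hist f a := by
  classical
  rw [← Finset.prod_fiberwise_of_maps_to (g := f) (fun j _ => Finset.mem_univ (f j))
    (fun j => x (f j))]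
  refine Finset.prod_congr rfl fun a _ => ?_
  rw [Finset.prod_congr rfl
      (fun j hj => by rw [(Finset.mem_filter.1 hj).2] : ∀ j ∈ _, x (f j) = x a),
    Finset.prod_const, hist]

lemma multinomial_cast {p d : ℕ} (c : Fin d → ℕ) (hc : ∑ a, c a = p) :
    (Nat.multinomial Finset.univ c : ℝ) = (p.factorial : ℝ) / ∏ a, ((c a).factorial : ℝ) := by
  have hs := Nat.multinomial_spec Finset.univ c
  rw [hc] at hs
  have hne : (∏ a, ((c a).factorial : ℝ)) ≠ 0 :=
    Finset.prod_ne_zero_iff.2 fun a _ => Nat.cast_ne_zero.2 (Nat.factorial_ne_zero _)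
  field_simp
  push_cast [← hs]
  ring

/-- For all d ≥ 1, p ≥ 1 and q, k ∈ ℝ^d,
⟨spow_p(q), spow_p(k)⟩ = (⟨q,k⟩)^p. -/
theorem spow_inner_product (d p : ℕ) (hd : 1 ≤ d) (hp : 1 ≤ p) (q k : Fin d → ℝ) :
    ∑ i : {f : Fin p → Fin d // Monotone f}, spow p q i * spow p k i
      = (∑ a, q a * k a) ^ p := by
  classical
  rw [Finset.sum_pow_eq_sum_piAntidiag]
  refine Finset.sum_bij (fun i _ => hist i.1) ?_ ?_ ?_ ?_
  · intro i _
    exact Finset.mem_piAntidiag.2 ⟨sum_hist i.1, fun a _ => Finset.mem_univ a⟩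
  · intro i _ j _ h
    exact Subtype.ext (hist_inj i.2 j.2 h)
  · intro c hc
    obtain ⟨hsum, -⟩ := Finset.mem_piAntidiag.1 hc
    obtain ⟨f, hmono, hf⟩ := hist_surj c hsum
    exact ⟨⟨f, hmono⟩, Finset.mem_univ _, hf⟩
  · intro i _
    have hA : (0:ℝ) ≤ (p.factorial : ℝ) / ∏ a, ((hist i.1 a).factorial : ℝ) := by
      positivity
    rw [spow, spow, multinomial_cast _ (sum_hist i.1)]
    rw [show ∀ a b c : ℝ, a * b * (a * c) = (a * a) * (b * c) from fun _ _ _ => by ring,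
      Real.mul_self_sqrt hA]
    rw [prod_comp_hist q, prod_comp_hist k, ← Finset.prod_mul_distrib]
    simp_rw [← mul_pow]
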